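/- arXiv:2108.13986 — 2 statements merged into one kernel-verified Lean document; each statement's English description precedes it below -/
import Mathlib

section
/- Let A be a Noetherian ring and M a finitely generated A-module. Then the set U_M = { p ∈ Spec(A) : M ⊗_A A_p is a flat A_p-module } is an open subset of Spec(A). -/
/-- **Openness of the flat locus.**  Let `A` be a Noetherian ring and `M` a finitely
generated `A`-module.  Then the set of primes `p` of `A` such that `M ⊗_A A_p` is a
flat `A_p`-module is an open subset of `Spec A`. -/
theorem flatLocus_isOpen (A : Type) [CommRing A] [IsNoetherianRing A]
    (M : Type) [AddCommGroup M] [Module A M] [Module.Finite A M] :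
    IsOpen {p : PrimeSpectrum A |
      Module.Flat (Localization p.asIdeal.primeCompl)
        (LocalizedModule p.asIdeal.primeCompl M)} := by
  have : Module.FinitePresentation A M :=
    Module.finitePresentation_of_finite A M
  have h : {p : PrimeSpectrum A |
      Module.Flat (Localization p.asIdeal.primeCompl)
        (LocalizedModule p.asIdeal.primeCompl M)} = Module.freeLocus A M := by
    ext p
    constructor
    · intro hp
      have hflat : Module.Flat (Localization.AtPrime p.asIdeal)
          (LocalizedModule p.asIdeal.primeCompl M) := hp
      exact Module.free_of_flat_of_isLocalRing
    · intro hp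
      have hfree : Module.Free (Localization.AtPrime p.asIdeal)
          (LocalizedModule p.asIdeal.primeCompl M) := hp
      show Module.Flat (Localization.AtPrime p.asIdeal)
          (LocalizedModule p.asIdeal.primeCompl M)
      infer_instance
  rw [h]
  exact Module.isOpen_freeLocus
end

section
/- Let K^• be a cochain complex of A-modules and N an A-module. Then there is an exact sequence of A-modules 0 → H^i(K^• ⊗_A N) → C^i(K^•) ⊗_A N → K^{i+1} ⊗_A N → C^{i+1}(K^•) ⊗_A N → 0, where C^i(K^•) denotes the cokernel of the differential K^{i−1} → K^i. -/
open TensorProduct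

/-- **The four-term exact sequence obtained by tensoring a cochain complex.**
Given a segment `K₀ → K₁ → K₂` of a cochain complex of `A`-modules (so the statement
at cohomological degree `i` involves `K₀ = K^{i-1}`, `K₁ = K^i`, `K₂ = K^{i+1}`) and an
`A`-module `N`, there is an exact sequence
`0 → H^i(K^• ⊗ N) → C^i(K^•) ⊗ N → K^{i+1} ⊗ N → C^{i+1}(K^•) ⊗ N → 0`,
where `C^i` denotes the cokernel of the incoming differential, the middle map is the
one induced by `φ₁ = φ^i`, and `H^i(K^• ⊗ N)` embeds via the natural map. -/
theorem fourTerm_exact_of_tensor (A : Type) [CommRing A]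
    (K₀ K₁ K₂ N : Type)
    [AddCommGroup K₀] [Module A K₀] [AddCommGroup K₁] [Module A K₁]
    [AddCommGroup K₂] [Module A K₂] [AddCommGroup N] [Module A N]
    (φ₀ : K₀ →ₗ[A] K₁) (φ₁ : K₁ →ₗ[A] K₂) (hc : φ₁.comp φ₀ = 0) :
    ∃ (f₁ : (↥(LinearMap.ker (LinearMap.rTensor N φ₁)) ⧸
          Submodule.comap (LinearMap.ker (LinearMap.rTensor N φ₁)).subtype
            (LinearMap.range (LinearMap.rTensor N φ₀))) →ₗ[A]
          ((K₁ ⧸ LinearMap.range φ₀) ⊗[A] N))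
      (f₂ : ((K₁ ⧸ LinearMap.range φ₀) ⊗[A] N) →ₗ[A] (K₂ ⊗[A] N)),
      -- `f₁` is the natural map from the homology of the tensored complex
      f₁.comp (Submodule.mkQ (Submodule.comap
            (LinearMap.ker (LinearMap.rTensor N φ₁)).subtype
            (LinearMap.range (LinearMap.rTensor N φ₀)))) =
        (LinearMap.rTensor N (LinearMap.range φ₀).mkQ).comp
          (LinearMap.ker (LinearMap.rTensor N φ₁)).subtype ∧
      -- `f₂` is induced by `φ₁`
      f₂.comp (LinearMap.rTensor N (LinearMap.range φ₀).mkQ) = LinearMap.rTensor N φ₁ ∧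
      -- exactness of the four-term sequence
      Function.Injective f₁ ∧
      Function.Exact f₁ f₂ ∧
      Function.Exact f₂ (LinearMap.rTensor N (LinearMap.range φ₁).mkQ) ∧
      Function.Surjective (LinearMap.rTensor N (LinearMap.range φ₁).mkQ) := by
  classical
  set π := (LinearMap.range φ₀).mkQ
  have hπsurj : Function.Surjective (LinearMap.rTensor N π) :=
    LinearMap.rTensor_surjective N (Submodule.mkQ_surjective _)
  -- right exactness at K₁ ⊗ N
  have hK1 : Function.Exact (LinearMap.rTensor N φ₀) (LinearMap.rTensor N π) :=
    rTensor_exact N (LinearMap.exact_map_mkQ_range φ₀) (Submodule.mkQ_surjective _)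
  have hK2 : Function.Exact (LinearMap.rTensor N φ₁)
      (LinearMap.rTensor N (LinearMap.range φ₁).mkQ) :=
    rTensor_exact N (LinearMap.exact_map_mkQ_range φ₁) (Submodule.mkQ_surjective _)
  -- f₂
  have hle : LinearMap.range φ₀ ≤ LinearMap.ker φ₁ := by
    rintro x ⟨y, rfl⟩
    simpa using LinearMap.congr_fun hc y
  set φbar : (K₁ ⧸ LinearMap.range φ₀) →ₗ[A] K₂ :=
    (LinearMap.range φ₀).liftQ φ₁ hle
  set f₂ : ((K₁ ⧸ LinearMap.range φ₀) ⊗[A] N) →ₗ[A] (K₂ ⊗[A] N) :=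
    LinearMap.rTensor N φbar
  have hf₂ : f₂.comp (LinearMap.rTensor N π) = LinearMap.rTensor N φ₁ := by
    rw [← LinearMap.rTensor_comp]
    congr 1
  -- f₁
  set g : (↥(LinearMap.ker (LinearMap.rTensor N φ₁))) →ₗ[A]
      ((K₁ ⧸ LinearMap.range φ₀) ⊗[A] N) :=
    (LinearMap.rTensor N π).comp (LinearMap.ker (LinearMap.rTensor N φ₁)).subtype
  have hkerg : LinearMap.ker g = Submodule.comap
      (LinearMap.ker (LinearMap.rTensor N φ₁)).subtype
      (LinearMap.range (LinearMap.rTensor N φ₀)) := by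
    ext x
    simp only [LinearMap.mem_ker, LinearMap.coe_comp, Function.comp_apply,
      Submodule.coe_subtype, Submodule.mem_comap, LinearMap.mem_range, g]
    rw [hK1 (x : K₁ ⊗[A] N)]
    exact Iff.rfl
  set f₁ := Submodule.liftQ _ g hkerg.ge
  refine ⟨f₁, f₂, Submodule.liftQ_mkQ _ _ _, hf₂, ?_, ?_, ?_,
    LinearMap.rTensor_surjective N (Submodule.mkQ_surjective _)⟩
  · rw [← LinearMap.ker_eq_bot]
    exact Submodule.ker_liftQ_eq_bot _ _ _ hkerg.le
  · intro y
    constructor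
    · intro hy
      obtain ⟨x, rfl⟩ := hπsurj y
      have hx : x ∈ LinearMap.ker (LinearMap.rTensor N φ₁) := by
        rw [LinearMap.mem_ker, ← hf₂]
        exact hy
      exact ⟨Submodule.mkQ _ ⟨x, hx⟩, rfl⟩
    · rintro ⟨z, rfl⟩
      obtain ⟨w, rfl⟩ := Submodule.mkQ_surjective _ z
      have : f₁ (Submodule.mkQ _ w) = LinearMap.rTensor N π (w : K₁ ⊗[A] N) := rfl
      rw [this, ← LinearMap.comp_apply, hf₂]
      exact w.2
  · intro z
    rw [hK2 z]
    constructor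
    · rintro ⟨x, rfl⟩
      exact ⟨LinearMap.rTensor N π x, LinearMap.congr_fun hf₂ x⟩
    · rintro ⟨y, rfl⟩
      obtain ⟨x, rfl⟩ := hπsurj y
      exact ⟨x, (LinearMap.congr_fun hf₂ x).symm⟩
end
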